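/- Let H, G, K be finite groups and π : G → K a surjective group homomorphism with kernel H. Suppose (H,G) has the (E_{G|H}, d₁)-UHJP, where E_{G|H} is the relation g E g′ iff π(g) = π(g′), and suppose K has the d_K-UHJP. Then G has the (d₁·d_K)-UHJP. -/
import Mathlib


/-- Evaluation of a variable word: letters are left unchanged, the variable `v_s`
is replaced by `s • x`. -/
def evalW {S X : Type*} [SMul S X] {N : ℕ} (w : Fin N → X ⊕ S) (x : X) : Fin N → X :=
  fun i => Sum.elim id (fun s => s • x) (w i)

open scoped Classical in
/-- `w` is a uniform variable word of degree `d`: every variable `v_s` (`s : S`)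
occurs the same positive number of times, and the total number of variable
positions is `d`. -/
def IsUnifWord {S X : Type*} {N : ℕ} (w : Fin N → X ⊕ S) (d : ℕ) : Prop :=
  (∃ m : ℕ, 0 < m ∧ ∀ s : S,
      (Finset.univ.filter (fun i => w i = Sum.inr s)).card = m) ∧
  (Finset.univ.filter (fun i => (w i).isRight = true)).card = d

/-- `G` has the `d`-uniform Hales–Jewett property. -/
def UHJP (G : Type*) [Group G] (d : ℕ) : Prop :=
  ∀ r : ℕ, ∃ N : ℕ, ∀ c : (Fin N → G) → Fin r,
    ∃ w : Fin N → G ⊕ G, IsUnifWord w d ∧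
      ∀ g g' : G, c (evalW w g) = c (evalW w g')

/-- `(S, X)` has the `(E, d)`-uniform Hales–Jewett property. -/
def PairUHJP (S X : Type*) [SMul S X] (E : X → X → Prop) (d : ℕ) : Prop :=
  ∀ r : ℕ, ∃ N : ℕ, ∀ c : (Fin N → X) → Fin r,
    ∃ w : Fin N → X ⊕ S, IsUnifWord w d ∧
      ∀ x x' : X, E x x' → c (evalW w x) = c (evalW w x')

open scoped Classical
open Finset Sum

/-- filter cards do not depend on the decidability instance -/
lemma card_inst {α : Type*} [Fintype α] {p : α → Prop} (i1 i2 : DecidablePred p) :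
    (@Finset.filter α p i1 Finset.univ).card = (@Finset.filter α p i2 Finset.univ).card :=
  congrArg (fun i => (@Finset.filter α p i Finset.univ).card) (Subsingleton.elim i1 i2)

/-- instance-polymorphic congruence for filter cards -/
lemma cardEq {α : Type*} [Fintype α] {p q : α → Prop} [DecidablePred p] [DecidablePred q]
    (h : ∀ a, p a ↔ q a) :
    (Finset.univ.filter p).card = (Finset.univ.filter q).card :=
  congrArg Finset.card (Finset.filter_congr fun a _ => h a)

lemma card_filter_isRight_eq_sum {X S : Type*} [Fintype S] {N : ℕ} (w : Fin N → X ⊕ S)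
    [i1 : DecidablePred fun i : Fin N => (w i).isRight = true]
    [i2 : ∀ s : S, DecidablePred fun i : Fin N => w i = inr s] :
    (Finset.univ.filter (fun i : Fin N => (w i).isRight = true)).card
      = ∑ s : S, (Finset.univ.filter (fun i => w i = inr s)).card := by
  have h : (Finset.univ.filter (fun i : Fin N => (w i).isRight = true))
      = Finset.univ.biUnion (fun s : S => Finset.univ.filter (fun i => w i = inr s)) := by
    ext j
    simp only [mem_filter, mem_biUnion, mem_univ, true_and]
    cases h : w j <;> simp
  rw [h, card_biUnion]
  intro s _ s' _ hss
  simp only [disjoint_left, mem_filter, mem_univ, true_and]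
  rintro j h1 h2
  rw [h1] at h2
  exact hss (inr_injective h2)

lemma mult_eq {X S : Type*} [Fintype S] {N : ℕ} {w : Fin N → X ⊕ S} {d m : ℕ}
    [i1 : DecidablePred fun i : Fin N => (w i).isRight = true]
    [i2 : ∀ s : S, DecidablePred fun i : Fin N => w i = inr s]
    (h : (Finset.univ.filter (fun i : Fin N => (w i).isRight = true)).card = d)
    (hm : ∀ s : S, (Finset.univ.filter (fun i => w i = inr s)).card = m) :
    m * Fintype.card S = d := by
  rw [← h, card_filter_isRight_eq_sum w]
  simp [hm, mul_comm]

lemma card_filter_append {α : Type*} {m n : ℕ} (a : Fin m → α) (b : Fin n → α) (p : α → Prop)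
    [i1 : DecidablePred fun j : Fin (m + n) => p (Fin.append a b j)]
    [i2 : DecidablePred fun j : Fin m => p (a j)]
    [i3 : DecidablePred fun j : Fin n => p (b j)] :
    (Finset.univ.filter (fun j : Fin (m+n) => p (Fin.append a b j))).card
      = (Finset.univ.filter (fun j => p (a j))).card
        + (Finset.univ.filter (fun j => p (b j))).card := by
  rw [card_filter, card_filter, card_filter, Fin.sum_univ_add]
  congr 1 <;> refine Finset.sum_congr rfl fun i _ => ?_ <;>
    simp [Fin.append_left, Fin.append_right]

/-- multi-block evaluation -/
def evalM {G : Type*} [Group G] (H : Subgroup G) {M N : ℕ}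
    (W : Fin N → G ⊕ (Fin M × ↥H)) (g : Fin M → G) : Fin N → G :=
  fun j => Sum.elim id (fun p => (p.2 : G) * g p.1) (W j)

lemma multi {G K : Type*} [Group G] [Fintype G] [Group K] [Fintype K]
    (π : G →* K) (hsurj : Function.Surjective π) (H : Subgroup G)
    (d₁ m₀ : ℕ) (hmH : m₀ * Fintype.card ↥H = d₁)
    (h1 : PairUHJP (↥H) G (fun g g' => π g = π g') d₁) (M : ℕ) :
    ∀ r : ℕ, ∃ N, ∀ c : (Fin N → G) → Fin r, ∃ W : Fin N → G ⊕ (Fin M × ↥H),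
      (∀ (i : Fin M) (h : ↥H),
        (Finset.univ.filter (fun j => W j = inr (i, h))).card = m₀) ∧
      ∀ g g' : Fin M → G, (∀ i, π (g i) = π (g' i)) →
        c (evalM H W g) = c (evalM H W g') := by
  induction M with
  | zero =>
    intro r
    refine ⟨0, fun c => ⟨Fin.elim0, fun i => i.elim0, fun g g' _ => ?_⟩⟩
    congr 1; funext j; exact j.elim0
  | succ M IH =>
    intro r
    obtain ⟨N', hN'⟩ := IH (Fintype.card (K → Fin r))
    obtain ⟨N₁, hN₁⟩ := h1 (Fintype.card ((Fin N' → G) → Fin r))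
    refine ⟨N₁ + N', fun c => ?_⟩
    set e₁ := Fintype.equivFin ((Fin N' → G) → Fin r)
    obtain ⟨w₁, ⟨⟨m₁, hm₁pos, hm₁⟩, hd₁⟩, hw₁c⟩ :=
      hN₁ (fun x => e₁ (fun y => c (Fin.append x y)))
    have hd₁' : (Finset.univ.filter (fun i => (w₁ i).isRight = true)).card = d₁ :=
      (card_inst _ _).trans hd₁
    have hm₁' : ∀ s : ↥H, (Finset.univ.filter (fun i => w₁ i = inr s)).card = m₁ :=
      fun s => (card_inst _ _).trans (hm₁ s)
    have hm₁m₀ : m₁ = m₀ :=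
      Nat.eq_of_mul_eq_mul_right Fintype.card_pos ((mult_eq hd₁' hm₁').trans hmH.symm)
    have hw₁c' : ∀ g g' : G, π g = π g' → ∀ y,
        c (Fin.append (evalW w₁ g) y) = c (Fin.append (evalW w₁ g') y) := by
      intro g g' hgg' y
      exact congrFun (e₁.injective (hw₁c g g' hgg')) y
    set σ := Function.surjInv hsurj with hσdef
    have hσ : ∀ k, π (σ k) = k := fun k => Function.surjInv_eq hsurj k
    set e₂ := Fintype.equivFin (K → Fin r)
    obtain ⟨W', hW'count, hW'inv⟩ :=
      hN' (fun y => e₂ (fun k => c (Fin.append (evalW w₁ (σ k)) y)))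
    have hW'inv' : ∀ g g' : Fin M → G, (∀ i, π (g i) = π (g' i)) → ∀ k,
        c (Fin.append (evalW w₁ (σ k)) (evalM H W' g))
          = c (Fin.append (evalW w₁ (σ k)) (evalM H W' g')) := by
      intro g g' hgg' k
      exact congrFun (e₂.injective (hW'inv g g' hgg')) k
    set W : Fin (N₁ + N') → G ⊕ (Fin (M+1) × ↥H) :=
      Fin.append (fun j => (w₁ j).map id (fun h => ((0 : Fin (M+1)), h)))
        (fun j => (W' j).map id (fun p => (p.1.succ, p.2))) with hWdef
    have heval : ∀ g : Fin (M+1) → G,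
        evalM H W g = Fin.append (evalW w₁ (g 0)) (evalM H W' (g ∘ Fin.succ)) := by
      intro g; funext j
      refine Fin.addCases (fun i => ?_) (fun i => ?_) j
      · rw [show evalM H W g (Fin.castAdd N' i)
              = Sum.elim id (fun p => (p.2 : G) * g p.1) (W (Fin.castAdd N' i)) from rfl,
          hWdef, Fin.append_left, Fin.append_left]
        cases h : w₁ i <;> simp [evalW, h, Subgroup.smul_def]
      · rw [show evalM H W g (Fin.natAdd N₁ i)
              = Sum.elim id (fun p => (p.2 : G) * g p.1) (W (Fin.natAdd N₁ i)) from rfl,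
          hWdef, Fin.append_right, Fin.append_right]
        cases h : W' i <;> simp [evalM, h, Function.comp]
    refine ⟨W, ?_, ?_⟩
    · intro i h
      rw [hWdef]
      refine (card_filter_append _ _ (fun x => x = inr (i, h))).trans ?_
      refine Fin.cases ?_ (fun i' => ?_) i
      · have hB : (Finset.univ.filter
            (fun j => (fun x => x = inr ((0 : Fin (M+1)), h))
              ((W' j).map id (fun p => (p.1.succ, p.2))))).card = 0 := by
          rw [Finset.card_eq_zero, Finset.filter_eq_empty_iff]
          intro j _
          cases hw : W' j <;> simp [hw, Fin.succ_ne_zero]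
        have hA : (Finset.univ.filter
            (fun j => (fun x => x = inr ((0 : Fin (M+1)), h))
              ((w₁ j).map id (fun h' => ((0 : Fin (M+1)), h'))))).card = m₁ := by
          refine (cardEq fun j => ?_).trans (hm₁' h)
          cases hw : w₁ j <;> simp [hw]
        rw [hA, hB, hm₁m₀]; omega
      · have hA : (Finset.univ.filter
            (fun j => (fun x => x = inr (i'.succ, h))
              ((w₁ j).map id (fun h' => ((0 : Fin (M+1)), h'))))).card = 0 := by
          rw [Finset.card_eq_zero, Finset.filter_eq_empty_iff]
          intro j _
          cases hw : w₁ j <;> simp [hw, (Fin.succ_ne_zero i').symm]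
        have hB : (Finset.univ.filter
            (fun j => (fun x => x = inr (i'.succ, h))
              ((W' j).map id (fun p => (p.1.succ, p.2))))).card = m₀ := by
          refine (cardEq fun j => ?_).trans (hW'count i' h)
          cases hw : W' j <;> simp [hw, Fin.succ_inj, Prod.ext_iff]
        rw [hA, hB]; omega
    · intro g g' hgg'
      rw [heval g, heval g']
      calc c (Fin.append (evalW w₁ (g 0)) (evalM H W' (g ∘ Fin.succ)))
          = c (Fin.append (evalW w₁ (σ (π (g 0)))) (evalM H W' (g ∘ Fin.succ))) :=
            hw₁c' _ _ ((hσ _).symm) _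
        _ = c (Fin.append (evalW w₁ (σ (π (g 0)))) (evalM H W' (g' ∘ Fin.succ))) :=
            hW'inv' _ _ (fun i => hgg' i.succ) _
        _ = c (Fin.append (evalW w₁ (σ (π (g' 0)))) (evalM H W' (g' ∘ Fin.succ))) := by
            rw [hgg' 0]
        _ = c (Fin.append (evalW w₁ (g' 0)) (evalM H W' (g' ∘ Fin.succ))) :=
            hw₁c' _ _ (hσ _) _

/-- If `π : G → K` is a surjective homomorphism with kernel `H`, `(H, G)` has the
`(E_{G|H}, d₁)`-UHJP (where `g E g' ↔ π g = π g'`) and `K` has the `d_K`-UHJP, then `G` has the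
`(d₁·d_K)`-UHJP. -/
theorem extension_step (G K : Type*) [Group G] [Fintype G] [Group K] [Fintype K]
    (π : G →* K) (hsurj : Function.Surjective π)
    (H : Subgroup G) (hker : π.ker = H)
    (d₁ dK : ℕ)
    (h1 : PairUHJP (↥H) G (fun g g' => π g = π g') d₁)
    (h2 : UHJP K dK) :
    UHJP G (d₁ * dK) := by
  -- extract the (fixed) multiplicity m₀ of H-words of degree d₁
  obtain ⟨N₀, hN₀⟩ := h1 1
  obtain ⟨w₀, ⟨⟨m₀, hm₀pos, hm₀⟩, hd₀⟩, -⟩ := hN₀ (fun _ => 0)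
  have hd₀' : (Finset.univ.filter (fun i => (w₀ i).isRight = true)).card = d₁ :=
    (card_inst _ _).trans hd₀
  have hm₀' : ∀ s : ↥H, (Finset.univ.filter (fun i => w₀ i = inr s)).card = m₀ :=
    fun s => (card_inst _ _).trans (hm₀ s)
  have hmH : m₀ * Fintype.card ↥H = d₁ := mult_eq hd₀' hm₀'
  -- cardinality of G
  have hcardG : Fintype.card G = Fintype.card K * Fintype.card ↥H := by
    rw [← Fintype.card_prod]
    refine Fintype.card_congr ?_
    refine (Subgroup.groupEquivQuotientProdSubgroup (s := H)).trans
      (Equiv.prodCongr ?_ (Equiv.refl _))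
    rw [← hker]
    exact (QuotientGroup.quotientKerEquivOfSurjective π hsurj).toEquiv
  intro r
  obtain ⟨M, hM⟩ := h2 r
  obtain ⟨N, hN⟩ := multi π hsurj H d₁ m₀ hmH h1 M r
  refine ⟨N, fun c => ?_⟩
  obtain ⟨W, hWcount, hWinv⟩ := hN c
  set σ := Function.surjInv hsurj with hσdef
  have hσ : ∀ k, π (σ k) = k := fun k => Function.surjInv_eq hsurj k
  obtain ⟨u, ⟨⟨mK, hmKpos, hmK⟩, hdK⟩, huc⟩ :=
    hM (fun κ => c (evalM H W (fun i => σ (κ i))))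
  have hdK' : (Finset.univ.filter (fun i => (u i).isRight = true)).card = dK :=
    (card_inst _ _).trans hdK
  have hmK' : ∀ k : K, (Finset.univ.filter (fun i => u i = inr k)).card = mK :=
    fun k => (card_inst _ _).trans (hmK k)
  have hmKK : mK * Fintype.card K = dK := mult_eq hdK' hmK'
  have hπH : ∀ h : ↥H, π (h : G) = 1 := by
    intro h
    rw [← MonoidHom.mem_ker, hker]
    exact h.2
  -- the final word
  set w : Fin N → G ⊕ G := fun j =>
    Sum.elim inl
      (fun p => Sum.elim (fun k => inl ((p.2 : G) * σ k)) (fun k => inr ((p.2 : G) * σ k)) (u p.1))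
      (W j) with hwdef
  -- counting each variable
  have hcount : ∀ g' : G,
      (Finset.univ.filter (fun j => w j = inr g')).card = mK * m₀ := by
    intro g'
    have hmem : g' * (σ (π g'))⁻¹ ∈ H := by
      rw [← hker, MonoidHom.mem_ker, map_mul, map_inv, hσ, mul_inv_cancel]
    set h₀ : ↥H := ⟨g' * (σ (π g'))⁻¹, hmem⟩ with hh₀
    have hsplit : Finset.univ.filter (fun j => w j = inr g')
        = (Finset.univ.filter (fun i : Fin M => u i = inr (π g'))).biUnion
            (fun i => Finset.univ.filter (fun j => W j = inr (i, h₀))) := by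
      ext j
      simp only [mem_filter, mem_biUnion, mem_univ, true_and]
      constructor
      · intro hj
        rcases hWj : W j with a | p
        · rw [hwdef] at hj; simp [hWj] at hj
        rcases hui : u p.1 with k | k
        · rw [hwdef] at hj; simp [hWj, hui] at hj
        rw [hwdef] at hj
        simp only [hWj, hui, Sum.elim_inr, inr.injEq] at hj
        have hk : k = π g' := by
          rw [← hj, map_mul, hπH, one_mul, hσ]
        refine ⟨p.1, by rw [hui, hk], ?_⟩
        have hp2 : p.2 = h₀ := by
          refine Subtype.ext (show (p.2 : G) = g' * (σ (π g'))⁻¹ from ?_)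
          rw [← hk]
          exact eq_mul_inv_of_mul_eq hj
        rw [← hp2]
      · rintro ⟨i, hui, hWj⟩
        rw [hwdef]
        simp only [hWj, hui, Sum.elim_inr, inr.injEq]
        exact inv_mul_cancel_right _ _
    rw [hsplit, card_biUnion]
    · rw [Finset.sum_congr rfl (fun i _ => hWcount i h₀), Finset.sum_const, smul_eq_mul,
        hmK' (π g')]
    · intro i _ i' _ hii
      simp only [disjoint_left, mem_filter, mem_univ, true_and]
      rintro j hj1 hj2
      rw [hj1] at hj2
      simp only [inr.injEq, Prod.mk.injEq] at hj2
      exact hii hj2.1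
  -- evaluation of the final word
  have hev : ∀ g : G, evalW w g
      = evalM H W (fun i => Sum.elim σ (fun k => σ k * g) (u i)) := by
    intro g
    funext j
    rcases hWj : W j with a | p
    · simp [evalW, evalM, hwdef, hWj]
    rcases hui : u p.1 with k | k
    · simp [evalW, evalM, hwdef, hWj, hui]
    · simp [evalW, evalM, hwdef, hWj, hui, smul_eq_mul, mul_assoc]
  have hkey : ∀ g : G, c (evalW w g)
      = c (evalM H W (fun i => σ (evalW u (π g) i))) := by
    intro g
    rw [hev g]
    refine hWinv _ _ fun i => ?_
    rw [hσ]
    rcases hui : u i with k | k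
    · simp [evalW, hui, hσ]
    · simp [evalW, hui, hσ, map_mul, smul_eq_mul]
  refine ⟨w, ⟨⟨mK * m₀, Nat.mul_pos hmKpos hm₀pos,
      fun g' => (card_inst _ _).trans (hcount g')⟩, ?_⟩, fun g g' => ?_⟩
  · -- total degree
    refine ((card_inst _ _).trans (card_filter_isRight_eq_sum w)).trans ?_
    rw [Finset.sum_congr rfl (fun g' _ => hcount g'), Finset.sum_const, smul_eq_mul,
      Finset.card_univ, hcardG]
    rw [← hmH, ← hmKK]
    ring
  · rw [hkey g, hkey g']
    exact huc (π g) (π g')
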